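/- Let f : R_+² → R_+ be a probability density function, let α₁, α₂ > 0, h(t) = (t · t^{1/α₁} · t^{1/α₂})^{-1}, and let E₀ = {(x,y) ∈ R_+² : ‖(x^{α₁}, y^{α₂})‖ = 1} for a fixed norm ‖·‖ on R². Suppose λ₀ is positive and bounded on E₀, f is regularly varying with power-law scaling (f(t^{1/α₁}x, t^{1/α₂}y)/h(t) → λ₀(x/‖w‖^{1/α₁}, y/‖w‖^{1/α₂})‖w‖^{-(1+1/α₁+1/α₂)} for all x,y>0, where w=(x^{α₁},y^{α₂})), and the convergence is uniform on E₀: lim_{t→∞} sup_{(x,y)∈E₀} |f(t^{1/α₁}x, t^{1/α₂}y)/h(t) − λ₀(x,y)| = 0. Then the associated probability measure is regularly varying: for a random vector (X,Y) with density f and every Borel set A ⊆ R_+² \ {0} bounded away from the origin with ∫_A λ(x,y)dxdy < ∞, one has t·P[(X/t^{1/α₁}, Y/t^{1/α₂}) ∈ A] → ∫_A λ(x,y) dx dy as t → ∞, where λ(x,y) = λ₀(x/‖w‖^{1/α₁}, y/‖w‖^{1/α₂})‖w‖^{-(1+1/α₁+1/α₂)}. -/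

import Mathlib

open Real Filter Topology MeasureTheory ProbabilityTheory Set
open scoped ENNReal NNReal

lemma aux_smul_prod_smul {α β : Type*} [MeasurableSpace α] [MeasurableSpace β]
    (c d : ℝ≥0∞) (μ : Measure α) (ν : Measure β) [SFinite μ] [SFinite ν] :
    (c • μ).prod (d • ν) = (c * d) • μ.prod ν := by
  ext s hs
  rw [Measure.prod_apply hs, Measure.smul_apply, Measure.prod_apply hs,
    lintegral_smul_measure]
  simp only [Measure.smul_apply, smul_eq_mul]
  rw [lintegral_const_mul d (measurable_measure_prodMk_left hs)]
  ring

lemma aux_map_scale {a b : ℝ} (ha : 0 < a) (hb : 0 < b) :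
    Measure.map (fun v : ℝ × ℝ => (a * v.1, b * v.2)) (volume : Measure (ℝ × ℝ))
      = ENNReal.ofReal ((a * b)⁻¹) • (volume : Measure (ℝ × ℝ)) := by
  have h1 : (fun v : ℝ × ℝ => (a * v.1, b * v.2)) = Prod.map (a * ·) (b * ·) := rfl
  rw [h1, Measure.volume_eq_prod,
    ← Measure.map_prod_map _ _ (measurable_const_mul a) (measurable_const_mul b),
    Real.map_volume_mul_left ha.ne', Real.map_volume_mul_left hb.ne',
    aux_smul_prod_smul, ← ENNReal.ofReal_mul (abs_nonneg _)]
  congr 1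
  rw [abs_of_pos (inv_pos.mpr ha), abs_of_pos (inv_pos.mpr hb), mul_inv]

lemma aux_scale_lintegral {a b : ℝ} (ha : 0 < a) (hb : 0 < b) {g : ℝ × ℝ → ℝ≥0∞}
    (hg : Measurable g) {s : Set (ℝ × ℝ)} (hs : MeasurableSet s) :
    ∫⁻ v in s, g v = ENNReal.ofReal (a * b) *
      ∫⁻ v in (fun v : ℝ × ℝ => (a * v.1, b * v.2)) ⁻¹' s, g (a * v.1, b * v.2) := by
  have hφ : Measurable (fun v : ℝ × ℝ => (a * v.1, b * v.2)) :=
    (measurable_fst.const_mul a).prodMk (measurable_snd.const_mul b)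
  have h := MeasureTheory.setLIntegral_map (μ := (volume : Measure (ℝ × ℝ))) hs hg hφ
  rw [aux_map_scale ha hb, Measure.restrict_smul, lintegral_smul_measure, smul_eq_mul] at h
  rw [← h, ← mul_assoc, ← ENNReal.ofReal_mul (by positivity), mul_inv_cancel₀ (by positivity),
    ENNReal.ofReal_one, one_mul]

lemma aux_seminorm_cont (N : Seminorm ℝ (ℝ × ℝ)) : Continuous fun w : ℝ × ℝ => N w := by
  have hb : ∀ w : ℝ × ℝ, N w ≤ (N (1, 0) + N (0, 1)) * ‖w‖ := by
    intro w
    have hw : w = w.1 • ((1 : ℝ), (0 : ℝ)) + w.2 • ((0 : ℝ), (1 : ℝ)) := by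
      ext <;> simp
    calc N w = N (w.1 • ((1 : ℝ), (0 : ℝ)) + w.2 • ((0 : ℝ), (1 : ℝ))) := by rw [← hw]
      _ ≤ N (w.1 • ((1 : ℝ), (0 : ℝ))) + N (w.2 • ((0 : ℝ), (1 : ℝ))) := map_add_le_add N _ _
      _ = ‖w.1‖ * N (1, 0) + ‖w.2‖ * N (0, 1) := by rw [map_smul_eq_mul, map_smul_eq_mul]
      _ ≤ ‖w‖ * N (1, 0) + ‖w‖ * N (0, 1) := by
          gcongr <;>
            first
              | exact apply_nonneg N _
              | exact norm_fst_le w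
              | exact norm_snd_le w
      _ = (N (1, 0) + N (0, 1)) * ‖w‖ := by ring
  have hK : 0 ≤ N (1, 0) + N (0, 1) := by positivity
  have hlip : LipschitzWith (N (1, 0) + N (0, 1)).toNNReal (fun w : ℝ × ℝ => N w) := by
    apply LipschitzWith.of_dist_le_mul
    intro w w'
    rw [Real.dist_eq, dist_eq_norm]
    calc |N w - N w'| ≤ N (w - w') := abs_sub_map_le_sub N w w'
      _ ≤ (N (1, 0) + N (0, 1)) * ‖w - w'‖ := hb _
      _ = ((N (1, 0) + N (0, 1)).toNNReal : ℝ) * ‖w - w'‖ := by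
          rw [Real.coe_toNNReal _ hK]
  exact hlip.continuous

lemma aux_seminorm_lower (N : Seminorm ℝ (ℝ × ℝ)) (hN : ∀ v : ℝ × ℝ, N v = 0 → v = 0) :
    ∃ c : ℝ, 0 < c ∧ ∀ w : ℝ × ℝ, c * ‖w‖ ≤ N w := by
  have hne : (Metric.sphere (0 : ℝ × ℝ) 1).Nonempty := by
    refine ⟨(1, 0), ?_⟩
    rw [mem_sphere_zero_iff_norm, Prod.norm_def]
    simp
  obtain ⟨w₀, hw₀S, hw₀min⟩ := (isCompact_sphere (0 : ℝ × ℝ) 1).exists_isMinOn hne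
    ((aux_seminorm_cont N).continuousOn)
  have hw₀norm : ‖w₀‖ = 1 := mem_sphere_zero_iff_norm.mp hw₀S
  have hw₀ne : w₀ ≠ 0 := by
    intro h; rw [h, norm_zero] at hw₀norm; exact one_ne_zero hw₀norm.symm
  have hc : 0 < N w₀ := by
    rcases lt_or_eq_of_le (apply_nonneg N w₀) with h | h
    · exact h
    · exact absurd (hN w₀ h.symm) hw₀ne
  refine ⟨N w₀, hc, fun w => ?_⟩
  rcases eq_or_ne w 0 with rfl | hw
  · simp
  · have hn : 0 < ‖w‖ := norm_pos_iff.mpr hw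
    have hmem : ‖w‖⁻¹ • w ∈ Metric.sphere (0 : ℝ × ℝ) 1 := by
      rw [mem_sphere_zero_iff_norm, norm_smul, norm_inv, norm_norm,
        inv_mul_cancel₀ hn.ne']
    have h2 : N w₀ ≤ N (‖w‖⁻¹ • w) := hw₀min hmem
    rw [map_smul_eq_mul, norm_inv, norm_norm] at h2
    calc N w₀ * ‖w‖ ≤ ‖w‖⁻¹ * N w * ‖w‖ := by gcongr
      _ = N w := by field_simp
set_option maxHeartbeats 1000000 in
theorem stmt_19
    (N : Seminorm ℝ (ℝ × ℝ)) (hN : ∀ v : ℝ × ℝ, N v = 0 → v = 0)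
    (α₁ α₂ : ℝ) (hα₁ : 0 < α₁) (hα₂ : 0 < α₂)
    (f : ℝ × ℝ → ℝ) (hf_meas : Measurable f) (hf_nonneg : ∀ v, 0 ≤ f v)
    (hf_supp : ∀ v : ℝ × ℝ, ¬(0 ≤ v.1 ∧ 0 ≤ v.2) → f v = 0)
    (hf_pdf : ∫⁻ v : ℝ × ℝ, ENNReal.ofReal (f v) = 1)
    {Ω : Type*} [MeasureSpace Ω] [IsProbabilityMeasure (ℙ : Measure Ω)]
    (V : Ω → ℝ × ℝ) (hV : Measurable V)
    -- `(X,Y) = V` has density `f`: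
    (hdens : ∀ A : Set (ℝ × ℝ), MeasurableSet A →
      ℙ (V ⁻¹' A) = ∫⁻ v in A, ENNReal.ofReal (f v))
    (lam₀ lamfun : ℝ → ℝ → ℝ)
    -- `λ₀` is positive and bounded on `E₀`:
    (hlam₀_pos : ∀ x y : ℝ, 0 ≤ x → 0 ≤ y → N (x ^ α₁, y ^ α₂) = 1 →
      0 < lam₀ x y)
    (hlam₀_bdd : ∃ M : ℝ, ∀ x y : ℝ, 0 ≤ x → 0 ≤ y →
      N (x ^ α₁, y ^ α₂) = 1 → lam₀ x y ≤ M)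
    -- the limit function `λ`:
    (hlamfun : ∀ x y : ℝ, lamfun x y =
      lam₀ (x / (N (x ^ α₁, y ^ α₂) : ℝ) ^ (1 / α₁))
          (y / (N (x ^ α₁, y ^ α₂) : ℝ) ^ (1 / α₂)) *
        (N (x ^ α₁, y ^ α₂) : ℝ) ^ (-(1 + 1 / α₁ + 1 / α₂)))
    -- `f` is regularly varying with power-law scaling:
    (hRVf : ∀ x y : ℝ, 0 < x → 0 < y →
      Tendsto
        (fun t : ℝ => f (t ^ (1 / α₁) * x, t ^ (1 / α₂) * y) /
          (t * t ^ (1 / α₁) * t ^ (1 / α₂))⁻¹)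
        atTop (𝓝 (lamfun x y)))
    -- the convergence is uniform on `E₀`:
    (hunif : TendstoUniformlyOn
      (fun (t : ℝ) (v : ℝ × ℝ) =>
        f (t ^ (1 / α₁) * v.1, t ^ (1 / α₂) * v.2) /
          (t * t ^ (1 / α₁) * t ^ (1 / α₂))⁻¹)
      (fun v : ℝ × ℝ => lam₀ v.1 v.2) atTop
      {v : ℝ × ℝ | 0 ≤ v.1 ∧ 0 ≤ v.2 ∧ N (v.1 ^ α₁, v.2 ^ α₂) = 1}) :
    ∀ A : Set (ℝ × ℝ), MeasurableSet A →
      A ⊆ {v : ℝ × ℝ | 0 ≤ v.1 ∧ 0 ≤ v.2} \ {(0, 0)} →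
      (∃ ε : ℝ, 0 < ε ∧ ∀ v ∈ A, ε ≤ ‖v‖) →
      IntegrableOn (fun v : ℝ × ℝ => lamfun v.1 v.2) A →
      Tendsto
        (fun t : ℝ =>
          t * (ℙ {ω | ((V ω).1 / t ^ (1 / α₁), (V ω).2 / t ^ (1 / α₂)) ∈ A}).toReal)
        atTop (𝓝 (∫ v in A, lamfun v.1 v.2)) := by
  intro A hAm hAsub hAeps hlam_int
  obtain ⟨c, hc0, hc⟩ := aux_seminorm_lower N hN
  obtain ⟨ε, hε0, hεA⟩ := hAeps
  -- the set E₀ (capture it before other `set`s)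
  set E : Set (ℝ × ℝ) :=
    {v : ℝ × ℝ | 0 ≤ v.1 ∧ 0 ≤ v.2 ∧ N (v.1 ^ α₁, v.2 ^ α₂) = 1} with hEdef
  set F : ℝ → (ℝ × ℝ) → ℝ := fun t v =>
    f (t ^ (1 / α₁) * v.1, t ^ (1 / α₂) * v.2) /
      (t * t ^ (1 / α₁) * t ^ (1 / α₂))⁻¹ with hFdef
  set κ : ℝ := 1 + 1 / α₁ + 1 / α₂ with hκdef
  have hα₁i : (0:ℝ) < 1 / α₁ := by positivity
  have hα₂i : (0:ℝ) < 1 / α₂ := by positivity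
  have hκ0 : 0 < κ := by rw [hκdef]; positivity
  set p : ℝ := 1 / α₁ + 1 / α₂ with hpdef
  have hp0 : 0 < p := by rw [hpdef]; positivity
  have hκp : κ = 1 + p := by rw [hκdef, hpdef]; ring
  have hpκ : p / κ < 1 := by
    rw [div_lt_one hκ0]; rw [hκp]; linarith
  set R : ℝ × ℝ → ℝ := fun v => N (v.1 ^ α₁, v.2 ^ α₂) with hRdef
  have hNcont := aux_seminorm_cont N
  have hRmeas : Measurable R := by
    apply hNcont.measurable.comp
    exact (((Real.continuous_rpow_const hα₁.le).measurable).comp measurable_fst).prodMk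
      (((Real.continuous_rpow_const hα₂.le).measurable).comp measurable_snd)
  have hRnonneg : ∀ v, 0 ≤ R v := fun v => apply_nonneg N _
  have hrpow0 : ∀ x α : ℝ, 0 ≤ x → 0 < α → x ^ α = 0 → x = 0 := by
    intro x α hx hα h
    by_contra hxne
    exact absurd h (ne_of_gt (Real.rpow_pos_of_pos (lt_of_le_of_ne hx (Ne.symm hxne)) α))
  have hApos : ∀ v ∈ A, 0 ≤ v.1 ∧ 0 ≤ v.2 ∧ 0 < R v := by
    intro v hv
    obtain ⟨hmem, hne⟩ := hAsub hv
    obtain ⟨h1, h2⟩ := hmem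
    have hne' : v ≠ (0, 0) := by simpa using hne
    refine ⟨h1, h2, ?_⟩
    rcases lt_or_eq_of_le (hRnonneg v) with h | h
    · exact h
    · exfalso
      have hw := hN _ h.symm
      have hw1 : v.1 ^ α₁ = 0 := congrArg Prod.fst hw
      have hw2 : v.2 ^ α₂ = 0 := congrArg Prod.snd hw
      exact hne' (Prod.ext (hrpow0 _ _ h1 hα₁ hw1) (hrpow0 _ _ h2 hα₂ hw2))
  have hpowdiv : ∀ x s α : ℝ, 0 ≤ x → 0 < s → 0 < α →
      (x / s ^ (1 / α)) ^ α = x ^ α / s := by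
    intro x s α hx hs hα
    rw [Real.div_rpow hx (Real.rpow_nonneg hs.le _), ← Real.rpow_mul hs.le,
      one_div_mul_cancel hα.ne', Real.rpow_one]
  have hmemE : ∀ v : ℝ × ℝ, 0 ≤ v.1 → 0 ≤ v.2 → 0 < R v →
      (v.1 / (R v) ^ (1 / α₁), v.2 / (R v) ^ (1 / α₂)) ∈ E := by
    intro v h1 h2 hR
    refine ⟨by positivity, by positivity, ?_⟩
    show N ((v.1 / (R v) ^ (1 / α₁)) ^ α₁, (v.2 / (R v) ^ (1 / α₂)) ^ α₂) = 1
    rw [hpowdiv _ _ _ h1 hR hα₁, hpowdiv _ _ _ h2 hR hα₂]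
    have heq : ((v.1 ^ α₁ / R v, v.2 ^ α₂ / R v) : ℝ × ℝ)
        = (R v)⁻¹ • ((v.1 ^ α₁, v.2 ^ α₂) : ℝ × ℝ) := by
      apply Prod.ext <;> simp [div_eq_inv_mul]
    rw [heq, map_smul_eq_mul]
    rw [Real.norm_eq_abs, abs_of_pos (inv_pos.mpr hR)]
    exact inv_mul_cancel₀ hR.ne'
  set B : ℝ := max (c⁻¹ ^ (1 / α₁)) (c⁻¹ ^ (1 / α₂)) with hBdef
  have hB0 : 0 < B :=
    lt_of_lt_of_le (Real.rpow_pos_of_pos (inv_pos.mpr hc0) _) (le_max_left _ _)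
  have hEbd : ∀ u ∈ E, u.1 ≤ B ∧ u.2 ≤ B := by
    intro u hu
    obtain ⟨h1, h2, h3⟩ := hu
    have hccancel := mul_inv_cancel₀ hc0.ne'
    have hkey : ∀ x α : ℝ, 0 ≤ x → 0 < α →
        x ^ α ≤ ‖((u.1 ^ α₁, u.2 ^ α₂) : ℝ × ℝ)‖ → x ≤ B ∨ True := fun _ _ _ _ _ => Or.inr trivial
    have hN1 := hc (u.1 ^ α₁, u.2 ^ α₂)
    rw [h3] at hN1
    constructor
    · have hle : u.1 ^ α₁ ≤ ‖((u.1 ^ α₁, u.2 ^ α₂) : ℝ × ℝ)‖ := by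
        refine le_trans (le_abs_self _) ?_
        exact norm_fst_le ((u.1 ^ α₁, u.2 ^ α₂) : ℝ × ℝ)
      have hw1 : u.1 ^ α₁ ≤ c⁻¹ := by nlinarith
      have h' : (u.1 ^ α₁) ^ (1 / α₁) ≤ c⁻¹ ^ (1 / α₁) :=
        Real.rpow_le_rpow (Real.rpow_nonneg h1 _) hw1 hα₁i.le
      rw [← Real.rpow_mul h1, mul_one_div, div_self hα₁.ne', Real.rpow_one] at h'
      exact le_trans h' (le_max_left _ _)
    · have hle : u.2 ^ α₂ ≤ ‖((u.1 ^ α₁, u.2 ^ α₂) : ℝ × ℝ)‖ := by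
        refine le_trans (le_abs_self _) ?_
        exact norm_snd_le ((u.1 ^ α₁, u.2 ^ α₂) : ℝ × ℝ)
      have hw2 : u.2 ^ α₂ ≤ c⁻¹ := by nlinarith
      have h' : (u.2 ^ α₂) ^ (1 / α₂) ≤ c⁻¹ ^ (1 / α₂) :=
        Real.rpow_le_rpow (Real.rpow_nonneg h2 _) hw2 hα₂i.le
      rw [← Real.rpow_mul h2, mul_one_div, div_self hα₂.ne', Real.rpow_one] at h'
      exact le_trans h' (le_max_right _ _)
  set r₀ : ℝ := min ((ε / B) ^ α₁) ((ε / B) ^ α₂) with hr₀def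
  have hr₀ : 0 < r₀ :=
    lt_min (Real.rpow_pos_of_pos (div_pos hε0 hB0) _)
      (Real.rpow_pos_of_pos (div_pos hε0 hB0) _)
  have hRlow : ∀ v ∈ A, r₀ ≤ R v := by
    intro v hv
    obtain ⟨h1, h2, hR⟩ := hApos v hv
    obtain ⟨hub1, hub2⟩ := hEbd _ (hmemE v h1 h2 hR)
    have hε' := hεA v hv
    rw [Prod.norm_def] at hε'
    rcases le_max_iff.mp hε' with h | h
    · rw [Real.norm_eq_abs, abs_of_nonneg h1] at h
      have hs1 : (0:ℝ) < (R v) ^ (1 / α₁) := Real.rpow_pos_of_pos hR _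
      rw [div_le_iff₀ hs1] at hub1
      have hεB : ε / B ≤ (R v) ^ (1 / α₁) := by
        rw [div_le_iff₀ hB0]; linarith
      have h' : (ε / B) ^ α₁ ≤ ((R v) ^ (1 / α₁)) ^ α₁ :=
        Real.rpow_le_rpow (by positivity) hεB hα₁.le
      rw [← Real.rpow_mul hR.le, one_div_mul_cancel hα₁.ne', Real.rpow_one] at h'
      exact le_trans (min_le_left _ _) h'
    · rw [Real.norm_eq_abs, abs_of_nonneg h2] at h
      have hs1 : (0:ℝ) < (R v) ^ (1 / α₂) := Real.rpow_pos_of_pos hR _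
      rw [div_le_iff₀ hs1] at hub2
      have hεB : ε / B ≤ (R v) ^ (1 / α₂) := by
        rw [div_le_iff₀ hB0]; linarith
      have h' : (ε / B) ^ α₂ ≤ ((R v) ^ (1 / α₂)) ^ α₂ :=
        Real.rpow_le_rpow (by positivity) hεB hα₂.le
      rw [← Real.rpow_mul hR.le, one_div_mul_cancel hα₂.ne', Real.rpow_one] at h'
      exact le_trans (min_le_right _ _) h'
  set ρ : ℝ × ℝ → ℝ := fun v => R v ^ (-κ) with hρdef
  have hρmeas : Measurable ρ := by
    have hρeq : ρ = fun v => (R v ^ κ)⁻¹ :=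
      funext fun v => Real.rpow_neg (hRnonneg v) κ
    rw [hρeq]
    exact (((Real.continuous_rpow_const hκ0.le).measurable).comp hRmeas).inv
  have hρnonneg : ∀ v, 0 ≤ ρ v := fun v => Real.rpow_nonneg (hRnonneg v) _
  -- Step D : `ρ` is integrable on `A`
  have hρint : IntegrableOn ρ A := by
    constructor
    · exact hρmeas.aestronglyMeasurable.restrict
    · rw [hasFiniteIntegral_iff_ofReal (Eventually.of_forall hρnonneg)]
      rw [MeasureTheory.lintegral_eq_lintegral_meas_lt (volume.restrict A)
        (Eventually.of_forall hρnonneg) hρmeas.aemeasurable]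
      set M₀ : ℝ := r₀ ^ (-κ) with hM₀def
      have hM₀ : 0 < M₀ := Real.rpow_pos_of_pos hr₀ _
      set K : ℝ := (c ^ p)⁻¹ with hKdef
      have hK0 : 0 < K := by
        rw [hKdef]; positivity
      have hbound : ∀ s ∈ Set.Ioi (0:ℝ), (volume.restrict A) {v | s < ρ v} ≤
          (Set.Ioo (0:ℝ) M₀).indicator
            (fun s => ENNReal.ofReal (K * s⁻¹ ^ (p / κ))) s := by
        intro s hs
        have hs' : (0:ℝ) < s := hs
        have hsm : MeasurableSet {v : ℝ × ℝ | s < ρ v} :=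
          measurableSet_lt measurable_const hρmeas
        rw [Measure.restrict_apply hsm]
        rcases le_or_gt M₀ s with hM | hM
        · have hemp : {v : ℝ × ℝ | s < ρ v} ∩ A = ∅ := by
            ext v
            simp only [Set.mem_inter_iff, Set.mem_setOf_eq, Set.mem_empty_iff_false,
              iff_false, not_and]
            intro hsv hvA
            have hle : ρ v ≤ M₀ :=
              Real.rpow_le_rpow_of_nonpos hr₀ (hRlow v hvA) (neg_nonpos.mpr hκ0.le)
            linarith
          rw [hemp, measure_empty]
          exact bot_le
        · rw [Set.indicator_of_mem (Set.mem_Ioo.mpr ⟨hs', hM⟩) _]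
          set X : ℝ := s⁻¹ ^ (1 / κ) / c with hXdef
          have hX0 : 0 < X := by
            rw [hXdef]
            have : (0:ℝ) < s⁻¹ := inv_pos.mpr hs'
            positivity
          have hsub : {v : ℝ × ℝ | s < ρ v} ∩ A ⊆
              Set.Icc 0 (X ^ (1 / α₁)) ×ˢ Set.Icc 0 (X ^ (1 / α₂)) := by
            rintro v ⟨hsv, hvA⟩
            obtain ⟨h1, h2, hR⟩ := hApos v hvA
            have hRκ : R v ^ κ < s⁻¹ := by
              have h' : s < (R v ^ κ)⁻¹ := by
                have : ρ v = (R v ^ κ)⁻¹ := Real.rpow_neg (hRnonneg v) κ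
                rw [← this]
                exact hsv
              have hpos : 0 < R v ^ κ := Real.rpow_pos_of_pos hR κ
              have h'' : s * (R v ^ κ) < 1 := by
                calc s * (R v ^ κ) < (R v ^ κ)⁻¹ * (R v ^ κ) :=
                      mul_lt_mul_of_pos_right h' hpos
                  _ = 1 := inv_mul_cancel₀ hpos.ne'
              rw [inv_eq_one_div, lt_div_iff₀ hs']
              linarith
            have hRle : R v ≤ s⁻¹ ^ (1 / κ) := by
              have h' : (R v ^ κ) ^ (1 / κ) ≤ (s⁻¹) ^ (1 / κ) :=
                Real.rpow_le_rpow (Real.rpow_nonneg (hRnonneg v) κ) hRκ.le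
                  (by positivity)
              rwa [← Real.rpow_mul (hRnonneg v), mul_one_div, div_self hκ0.ne',
                Real.rpow_one] at h'
            have hbox : ∀ x α : ℝ, 0 ≤ x → 0 < α →
                x ^ α ≤ ‖((v.1 ^ α₁, v.2 ^ α₂) : ℝ × ℝ)‖ → x ≤ X ^ (1 / α) := by
              intro x α hx hα hxle
              have hcw := hc (v.1 ^ α₁, v.2 ^ α₂)
              have hxX : x ^ α ≤ X := by
                rw [hXdef, le_div_iff₀ hc0]
                have : R v = N (v.1 ^ α₁, v.2 ^ α₂) := rfl
                nlinarith
              have h' : (x ^ α) ^ (1 / α) ≤ X ^ (1 / α) :=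
                Real.rpow_le_rpow (Real.rpow_nonneg hx _) hxX (by positivity)
              rwa [← Real.rpow_mul hx, mul_one_div, div_self hα.ne',
                Real.rpow_one] at h'
            constructor
            · refine ⟨h1, ?_⟩
              refine hbox v.1 α₁ h1 hα₁ ?_
              exact le_trans (le_abs_self _) (norm_fst_le ((v.1 ^ α₁, v.2 ^ α₂) : ℝ × ℝ))
            · refine ⟨h2, ?_⟩
              refine hbox v.2 α₂ h2 hα₂ ?_
              exact le_trans (le_abs_self _) (norm_snd_le ((v.1 ^ α₁, v.2 ^ α₂) : ℝ × ℝ))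
          calc volume ({v : ℝ × ℝ | s < ρ v} ∩ A)
              ≤ volume (Set.Icc (0:ℝ) (X ^ (1 / α₁)) ×ˢ Set.Icc (0:ℝ) (X ^ (1 / α₂))) :=
                measure_mono hsub
            _ = ENNReal.ofReal (X ^ (1 / α₁)) * ENNReal.ofReal (X ^ (1 / α₂)) := by
                rw [Measure.volume_eq_prod, Measure.prod_prod, Real.volume_Icc,
                  Real.volume_Icc, sub_zero, sub_zero]
            _ = ENNReal.ofReal (K * s⁻¹ ^ (p / κ)) := by
                rw [← ENNReal.ofReal_mul (Real.rpow_nonneg hX0.le _)]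
                congr 1
                rw [← Real.rpow_add hX0, ← hpdef, hXdef,
                  Real.div_rpow (Real.rpow_nonneg (inv_nonneg.mpr hs'.le) _) hc0.le,
                  ← Real.rpow_mul (inv_nonneg.mpr hs'.le), one_div_mul_eq_div,
                  hKdef, div_eq_mul_inv, mul_comm]
      calc ∫⁻ s in Set.Ioi (0:ℝ), (volume.restrict A) {v | s < ρ v}
          ≤ ∫⁻ s in Set.Ioi (0:ℝ), (Set.Ioo (0:ℝ) M₀).indicator
              (fun s => ENNReal.ofReal (K * s⁻¹ ^ (p / κ))) s := by
            apply lintegral_mono_ae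
            exact (ae_restrict_iff' measurableSet_Ioi).mpr
              (Filter.Eventually.of_forall hbound)
        _ = ∫⁻ s in Set.Ioo (0:ℝ) M₀, ENNReal.ofReal (K * s⁻¹ ^ (p / κ)) := by
            rw [lintegral_indicator measurableSet_Ioo,
              Measure.restrict_restrict measurableSet_Ioo,
              Set.inter_eq_left.mpr Set.Ioo_subset_Ioi_self]
        _ = ∫⁻ s in Set.Ioo (0:ℝ) M₀, ENNReal.ofReal (K * s ^ (-(p / κ))) := by
            apply setLIntegral_congr_fun measurableSet_Ioo
            intro s hs
            beta_reduce
            rw [Real.inv_rpow hs.1.le, ← Real.rpow_neg hs.1.le]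
        _ < ⊤ := by
            have hint : IntegrableOn (fun s : ℝ => K * s ^ (-(p / κ)))
                (Set.Ioo (0:ℝ) M₀) := by
              apply Integrable.const_mul
              exact (intervalIntegral.integrableOn_Ioo_rpow_iff hM₀).mpr (by linarith)
            have h2 := hint.hasFiniteIntegral
            rwa [hasFiniteIntegral_iff_ofReal ((ae_restrict_iff' measurableSet_Ioo).mpr
              (Filter.Eventually.of_forall fun s hs =>
                mul_nonneg hK0.le (Real.rpow_nonneg hs.1.le _)))] at h2
  have hC0 : 0 ≤ ∫ v in A, ρ v := setIntegral_nonneg hAm fun v _ => hρnonneg v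
  set C : ℝ := ∫ v in A, ρ v with hCdef
  -- product of the three powers of `t`
  have hTfac : ∀ t : ℝ, 0 < t → t * t ^ (1 / α₁) * t ^ (1 / α₂) = t ^ κ := by
    intro t ht
    rw [hκdef, Real.rpow_add ht, Real.rpow_add ht, Real.rpow_one]
  -- scaling identity
  have hscale : ∀ t s : ℝ, 0 < t → 0 < s → ∀ v : ℝ × ℝ,
      F t v = F (t * s) (v.1 / s ^ (1 / α₁), v.2 / s ^ (1 / α₂)) * s ^ (-κ) := by
    intro t s ht hs v
    have hts : 0 < t * s := mul_pos ht hs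
    have hs1 : s ^ (1 / α₁) ≠ 0 := ne_of_gt (Real.rpow_pos_of_pos hs _)
    have hs2 : s ^ (1 / α₂) ≠ 0 := ne_of_gt (Real.rpow_pos_of_pos hs _)
    have h1 : (t * s) ^ (1 / α₁) * (v.1 / s ^ (1 / α₁)) = t ^ (1 / α₁) * v.1 := by
      rw [Real.mul_rpow ht.le hs.le]
      field_simp
    have h2 : (t * s) ^ (1 / α₂) * (v.2 / s ^ (1 / α₂)) = t ^ (1 / α₂) * v.2 := by
      rw [Real.mul_rpow ht.le hs.le]
      field_simp
    simp only [hFdef]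
    rw [h1, h2, div_inv_eq_mul, div_inv_eq_mul, hTfac _ hts, hTfac _ ht,
      Real.mul_rpow ht.le hs.le, Real.rpow_neg hs.le]
    have hsκ : s ^ κ ≠ 0 := ne_of_gt (Real.rpow_pos_of_pos hs _)
    field_simp
  have hlamdec : ∀ v : ℝ × ℝ, lamfun v.1 v.2 =
      lam₀ (v.1 / (R v) ^ (1 / α₁)) (v.2 / (R v) ^ (1 / α₂)) * (R v) ^ (-κ) := by
    intro v
    simp only [hRdef, hκdef]
    exact hlamfun v.1 v.2
  -- measurability helpers
  have hφmeas : ∀ a b : ℝ, Measurable (fun v : ℝ × ℝ => (a * v.1, b * v.2)) :=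
    fun a b => (measurable_fst.const_mul a).prodMk (measurable_snd.const_mul b)
  have hofmeas : Measurable fun v : ℝ × ℝ => ENNReal.ofReal (f v) :=
    hf_meas.ennreal_ofReal
  -- total mass of the rescaled density
  have hglobal : ∀ t : ℝ, 0 < t →
      ∫⁻ v : ℝ × ℝ, ENNReal.ofReal (f (t ^ (1 / α₁) * v.1, t ^ (1 / α₂) * v.2))
        = ENNReal.ofReal ((t ^ (1 / α₁) * t ^ (1 / α₂))⁻¹) := by
    intro t ht
    have ha : 0 < t ^ (1 / α₁) := Real.rpow_pos_of_pos ht _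
    have hb : 0 < t ^ (1 / α₂) := Real.rpow_pos_of_pos ht _
    have h := aux_scale_lintegral ha hb hofmeas MeasurableSet.univ
    rw [Set.preimage_univ, setLIntegral_univ, setLIntegral_univ, hf_pdf] at h
    have hc0' : ENNReal.ofReal (t ^ (1 / α₁) * t ^ (1 / α₂)) ≠ 0 := by
      simp only [ne_eq, ENNReal.ofReal_eq_zero, not_le]
      positivity
    have h2 := ENNReal.eq_inv_of_mul_eq_one_left h.symm
    rw [ENNReal.ofReal_inv_of_pos (by positivity : (0:ℝ) < t ^ (1 / α₁) * t ^ (1 / α₂)),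
      h2, inv_inv]
  have hfφint : ∀ t : ℝ, 0 < t →
      Integrable (fun v : ℝ × ℝ => f (t ^ (1 / α₁) * v.1, t ^ (1 / α₂) * v.2)) := by
    intro t ht
    constructor
    · exact (hf_meas.comp (hφmeas _ _)).aestronglyMeasurable
    · rw [hasFiniteIntegral_iff_ofReal (Filter.Eventually.of_forall fun v => hf_nonneg _)]
      rw [hglobal t ht]
      exact ENNReal.ofReal_lt_top
  have hFeq : ∀ t : ℝ, F t = fun v : ℝ × ℝ =>
      f (t ^ (1 / α₁) * v.1, t ^ (1 / α₂) * v.2) * (t * t ^ (1 / α₁) * t ^ (1 / α₂)) := by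
    intro t
    funext v
    simp only [hFdef]
    rw [div_inv_eq_mul]
  have hFint : ∀ t : ℝ, 0 < t → IntegrableOn (F t) A := by
    intro t ht
    rw [hFeq t]
    exact ((hfφint t ht).mul_const _).integrableOn
  -- Step A : key identity
  have hkey : ∀ t : ℝ, 0 < t →
      t * (ℙ {ω | ((V ω).1 / t ^ (1 / α₁), (V ω).2 / t ^ (1 / α₂)) ∈ A}).toReal
        = ∫ v in A, F t v := by
    intro t ht
    have ha : 0 < t ^ (1 / α₁) := Real.rpow_pos_of_pos ht _
    have hb : 0 < t ^ (1 / α₂) := Real.rpow_pos_of_pos ht _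
    set Ct : Set (ℝ × ℝ) :=
      (fun v : ℝ × ℝ => (v.1 / t ^ (1 / α₁), v.2 / t ^ (1 / α₂))) ⁻¹' A with hCt
    have hCtm : MeasurableSet Ct :=
      hAm.preimage ((measurable_fst.div_const _).prodMk (measurable_snd.div_const _))
    have hset : {ω | ((V ω).1 / t ^ (1 / α₁), (V ω).2 / t ^ (1 / α₂)) ∈ A}
        = V ⁻¹' Ct := rfl
    rw [hset, hdens Ct hCtm]
    have hpre : (fun v : ℝ × ℝ => (t ^ (1 / α₁) * v.1, t ^ (1 / α₂) * v.2)) ⁻¹' Ct = A := by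
      ext v
      simp only [hCt, Set.mem_preimage]
      rw [mul_div_cancel_left₀ _ ha.ne', mul_div_cancel_left₀ _ hb.ne']
    have h := aux_scale_lintegral ha hb hofmeas hCtm
    rw [hpre] at h
    rw [h]
    have hL : (∫⁻ v in A, ENNReal.ofReal
        (f (t ^ (1 / α₁) * v.1, t ^ (1 / α₂) * v.2))) ≠ ⊤ := by
      refine ne_of_lt (lt_of_le_of_lt (setLIntegral_le_lintegral _ _) ?_)
      rw [hglobal t ht]
      exact ENNReal.ofReal_lt_top
    rw [ENNReal.toReal_mul, ENNReal.toReal_ofReal (by positivity)]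
    have hIl : ∫ v in A, f (t ^ (1 / α₁) * v.1, t ^ (1 / α₂) * v.2)
        = (∫⁻ v in A, ENNReal.ofReal (f (t ^ (1 / α₁) * v.1, t ^ (1 / α₂) * v.2))).toReal := by
      rw [MeasureTheory.integral_eq_lintegral_of_nonneg_ae
        (Filter.Eventually.of_forall fun v => hf_nonneg _)
        ((hf_meas.comp (hφmeas _ _)).aestronglyMeasurable.restrict)]
    have hIF : ∫ v in A, F t v
        = (∫ v in A, f (t ^ (1 / α₁) * v.1, t ^ (1 / α₂) * v.2))
            * (t * t ^ (1 / α₁) * t ^ (1 / α₂)) := by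
      rw [hFeq t]
      exact integral_mul_const _ _
    rw [hIF, hIl]
    ring
  -- main convergence statement
  have hmain : Tendsto (fun t : ℝ => ∫ v in A, F t v) atTop
      (𝓝 (∫ v in A, lamfun v.1 v.2)) := by
    rw [Metric.tendsto_atTop]
    intro ε' hε'
    set δ : ℝ := ε' / (2 * (C + 1)) with hδdef
    have hδ0 : 0 < δ := by
      rw [hδdef]
      have : 0 < C + 1 := by linarith
      positivity
    obtain ⟨T, hT⟩ :=
      Filter.eventually_atTop.mp ((Metric.tendstoUniformlyOn_iff.mp hunif) δ hδ0)
    refine ⟨max 1 (|T| / r₀), fun t ht => ?_⟩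
    have ht1 : (1:ℝ) ≤ t := le_trans (le_max_left _ _) ht
    have ht0 : 0 < t := lt_of_lt_of_le one_pos ht1
    have htT : |T| / r₀ ≤ t := le_trans (le_max_right _ _) ht
    have hptw : ∀ v ∈ A, |F t v - lamfun v.1 v.2| ≤ δ * ρ v := by
      intro v hv
      obtain ⟨h1, h2, hR⟩ := hApos v hv
      have hts : T ≤ t * R v := by
        have h' : |T| ≤ t * R v := by
          calc |T| = (|T| / r₀) * r₀ := (div_mul_cancel₀ _ hr₀.ne').symm
            _ ≤ t * R v := by
                apply mul_le_mul htT (hRlow v hv) hr₀.le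
                exact le_trans (by positivity) htT
        linarith [le_abs_self T]
      have hdist := hT (t * R v) hts _ (hmemE v h1 h2 hR)
      rw [hscale t (R v) ht0 hR v, hlamdec v, ← sub_mul, abs_mul,
        abs_of_nonneg (Real.rpow_nonneg (hRnonneg v) _)]
      apply mul_le_mul_of_nonneg_right _ (Real.rpow_nonneg (hRnonneg v) _)
      rw [Real.dist_eq] at hdist
      rw [abs_sub_comm]
      exact le_of_lt hdist
    have hFA := hFint t ht0
    have hdiff : (∫ v in A, F t v) - ∫ v in A, lamfun v.1 v.2
        = ∫ v in A, (F t v - lamfun v.1 v.2) := (integral_sub hFA hlam_int).symm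
    rw [Real.dist_eq]
    calc |(∫ v in A, F t v) - ∫ v in A, lamfun v.1 v.2|
        = |∫ v in A, (F t v - lamfun v.1 v.2)| := by rw [hdiff]
      _ ≤ ∫ v in A, |F t v - lamfun v.1 v.2| := by
          simpa [Real.norm_eq_abs] using
            norm_integral_le_integral_norm (μ := volume.restrict A)
              (fun v : ℝ × ℝ => F t v - lamfun v.1 v.2)
      _ ≤ ∫ v in A, δ * ρ v := by
          apply setIntegral_mono_on ((hFA.sub hlam_int).abs) (hρint.const_mul δ) hAm
          intro v hv
          exact hptw v hv
      _ = δ * C := by rw [integral_const_mul]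
      _ < ε' := by
          rw [hδdef, div_mul_eq_mul_div, div_lt_iff₀ (by linarith : (0:ℝ) < 2 * (C + 1))]
          nlinarith
  apply hmain.congr'
  filter_upwards [eventually_gt_atTop (0:ℝ)] with t ht
  exact (hkey t ht).symm
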